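/- (Theorem 3.1, (iii) ⇒ (iv)) Assume (iii): there exists C3 > 0 such that for all ε > 0, all t > 0 and all u0 ∈ L²(Ω), ‖S(t)u0‖² ≤ e^{C3(1 + (1/t)^{σ/(1−σ)})} e^{((C3/t) ln(e + 1/ε))^σ} ‖S(t)u0‖_ω² + ε ‖u0‖². Then (iv) holds: there exists C4 > 0 such that for all t > 0 and all u0 ∈ L²(Ω) with u0 ≠ 0, ‖S(t)u0‖ ≤ e^{C4(1 + (1/t)^{σ/(1−σ)})} e^{((C4/t) ln( ‖u0‖ / ‖S(t)u0‖ ))^σ} ‖S(t)u0‖_ω. -/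

import Mathlib

open MeasureTheory Set Filter
open scoped RealInnerProductSpace NNReal ENNReal

noncomputable section

lemma real_rpow_add_le {x y p : ℝ} (hx : 0 ≤ x) (hy : 0 ≤ y) (hp : 0 ≤ p) (hp1 : p ≤ 1) :
    (x + y) ^ p ≤ x ^ p + y ^ p := by
  lift x to ℝ≥0 using hx
  lift y to ℝ≥0 using hy
  exact_mod_cast NNReal.rpow_add_le_add_rpow x y hp hp1

lemma contraction_lemma {E : Type*} [NormedAddCommGroup E] [InnerProductSpace ℝ E]
    (B : HilbertBasis ℕ ℝ E) (g : ℕ → ℝ) (hg : ∀ j, |g j| ≤ 1) (u : E) :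
    ‖∑' j, (g j * ⟪u, B j⟫) • B j‖ ≤ ‖u‖ := by
  set c := B.repr u with hc
  have hcj : ∀ j, c j = ⟪u, B j⟫ := fun j => by
    rw [hc, B.repr_apply_apply, real_inner_comm]
  have h2 : (0:ℝ) < (2 : ℝ≥0∞).toReal := by norm_num
  have hsum : Summable fun j => ‖c j‖ ^ (2 : ℝ≥0∞).toReal := (lp.memℓp c).summable h2
  have hdom : ∀ j, ‖g j * c j‖ ^ (2 : ℝ≥0∞).toReal ≤ ‖c j‖ ^ (2 : ℝ≥0∞).toReal := by
    intro j
    refine Real.rpow_le_rpow (norm_nonneg _) ?_ h2.le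
    rw [norm_mul]
    calc ‖g j‖ * ‖c j‖ ≤ 1 * ‖c j‖ := by
          gcongr; exact (Real.norm_eq_abs _ ▸ hg j)
      _ = ‖c j‖ := one_mul _
  have hf : Memℓp (fun j => g j * c j) 2 := memℓp_gen <|
    hsum.of_nonneg_of_le (fun j => by positivity) hdom
  set F : lp (fun _ : ℕ => ℝ) 2 := ⟨_, hf⟩ with hF
  have heq : (∑' j, (g j * ⟪u, B j⟫) • B j) = B.repr.symm F := by
    rw [← (B.hasSum_repr_symm F).tsum_eq]
    congr 1
    ext j
    have : F j = g j * c j := rfl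
    rw [this, hcj]
  rw [heq, LinearIsometryEquiv.norm_map]
  have hU : ‖u‖ = ‖c‖ := (LinearIsometryEquiv.norm_map B.repr u).symm
  rw [hU]
  refine lp.norm_le_of_tsum_le h2 (norm_nonneg c) ?_
  rw [lp.norm_rpow_eq_tsum h2 c]
  exact Summable.tsum_le_tsum hdom ((lp.memℓp F).summable h2) hsum

set_option maxHeartbeats 1000000 in
/-- The purely real-arithmetic core of (iii) ⇒ (iv). -/
lemma arith_core {σ C3 t N U W : ℝ} (hσ0 : 0 < σ) (hσ1 : σ < 1) (hC3 : 0 < C3)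
    (ht : 0 < t) (hNpos : 0 < N) (hWnn : 0 ≤ W) (hNU : N ≤ U)
    (key : N ^ 2 ≤
      Real.exp (C3 * (1 + (1 / t) ^ (σ / (1 - σ)))) *
        Real.exp ((C3 / t * Real.log (Real.exp 1 + 1 / (N ^ 2 / (2 * U ^ 2)))) ^ σ) * W ^ 2
      + N ^ 2 / (2 * U ^ 2) * U ^ 2) :
    N ≤ Real.exp ((3 * C3 + (C3 * Real.log (Real.exp 1 + 2)) ^ σ + 1) *
          (1 + (1 / t) ^ (σ / (1 - σ)))) *
        Real.exp (((3 * C3 + (C3 * Real.log (Real.exp 1 + 2)) ^ σ + 1) / t *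
          Real.log (U / N)) ^ σ) * W := by
  have hexpσ : σ ≤ σ / (1 - σ) := by
    rw [le_div_iff₀ (by linarith)]
    nlinarith
  have hUpos : 0 < U := lt_of_lt_of_le hNpos hNU
  set a : ℝ := Real.log (Real.exp 1 + 2) with ha
  have ha1 : 1 ≤ a := by
    rw [ha]
    calc (1:ℝ) = Real.log (Real.exp 1) := (Real.log_exp 1).symm
      _ ≤ _ := Real.log_le_log (Real.exp_pos 1) (by linarith)
  set C4 : ℝ := 3 * C3 + (C3 * a) ^ σ + 1 with hC4
  set T : ℝ := (1 / t) ^ (σ / (1 - σ)) with hT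
  have hTnn : 0 ≤ T := Real.rpow_nonneg (by positivity) _
  set ℓ : ℝ := Real.log (U / N) with hℓ
  have hr1 : 1 ≤ U / N := (one_le_div hNpos).2 hNU
  have hℓnn : 0 ≤ ℓ := Real.log_nonneg hr1
  set L : ℝ := Real.log (Real.exp 1 + 1 / (N ^ 2 / (2 * U ^ 2))) with hL
  have hεU : N ^ 2 / (2 * U ^ 2) * U ^ 2 = N ^ 2 / 2 := by
    field_simp
  have step1 : N ^ 2 ≤ 2 * (Real.exp (C3 * (1 + T)) * Real.exp ((C3 / t * L) ^ σ)) * W ^ 2 := by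
    rw [hεU] at key
    linarith
  have hinv : 1 / (N ^ 2 / (2 * U ^ 2)) = 2 * (U / N) ^ 2 := by
    rw [one_div_div, div_pow, mul_div_assoc]
  have hLnn : 0 ≤ L := by
    refine Real.log_nonneg ?_
    have h1 : 0 < 1 / (N ^ 2 / (2 * U ^ 2)) := by positivity
    nlinarith [Real.add_one_le_exp (1:ℝ)]
  have stepL : L ≤ a + 2 * ℓ := by
    rw [hL, hinv]
    calc Real.log (Real.exp 1 + 2 * (U / N) ^ 2)
        ≤ Real.log ((Real.exp 1 + 2) * (U / N) ^ 2) := by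
          refine Real.log_le_log (by positivity) ?_
          have hr2 : (1:ℝ) ≤ (U / N) ^ 2 := by nlinarith
          nlinarith [Real.exp_pos 1]
      _ = a + 2 * ℓ := by
          rw [Real.log_mul (by positivity) (by positivity), Real.log_pow, hℓ, ha]
          push_cast
          ring
  have step3 : (C3 / t * L) ^ σ ≤ (C3 * a) ^ σ * (1 + T) + (2 * C3 / t * ℓ) ^ σ := by
    have h1 : C3 / t * L ≤ C3 * a * (1 / t) + 2 * C3 / t * ℓ := by
      calc C3 / t * L ≤ C3 / t * (a + 2 * ℓ) := by
            exact mul_le_mul_of_nonneg_left stepL (by positivity)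
        _ = C3 * a * (1 / t) + 2 * C3 / t * ℓ := by ring
    have hCL : 0 ≤ C3 / t * L := mul_nonneg (by positivity) hLnn
    calc (C3 / t * L) ^ σ
        ≤ (C3 * a * (1 / t) + 2 * C3 / t * ℓ) ^ σ := Real.rpow_le_rpow hCL h1 hσ0.le
      _ ≤ (C3 * a * (1 / t)) ^ σ + (2 * C3 / t * ℓ) ^ σ :=
          real_rpow_add_le (by positivity) (by positivity) hσ0.le hσ1.le
      _ ≤ (C3 * a) ^ σ * (1 + T) + (2 * C3 / t * ℓ) ^ σ := by
          gcongr ?_ + _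
          rw [Real.mul_rpow (by positivity) (by positivity)]
          refine mul_le_mul_of_nonneg_left ?_ (Real.rpow_nonneg (by positivity) σ)
          rcases le_or_gt (1 / t) 1 with hs | hs
          · have h01 : (1 / t) ^ σ ≤ 1 := Real.rpow_le_one (by positivity) hs hσ0.le
            linarith
          · have h02 : (1 / t) ^ σ ≤ (1 / t) ^ (σ / (1 - σ)) :=
              Real.rpow_le_rpow_of_exponent_le hs.le hexpσ
            rw [hT]; linarith
  set K : ℝ := 2 * (Real.exp (C3 * (1 + T)) * Real.exp ((C3 / t * L) ^ σ)) with hK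
  set D : ℝ := Real.exp (C4 * (1 + T)) * Real.exp ((C4 / t * ℓ) ^ σ) with hD
  have hKD : K ≤ D := by
    have h2e : (2:ℝ) ≤ Real.exp (1 + T) := by
      calc (2:ℝ) ≤ Real.exp 1 := by linarith [Real.add_one_le_exp (1:ℝ)]
        _ ≤ Real.exp (1 + T) := Real.exp_le_exp.2 (by linarith)
    have hmid : Real.exp ((C3 / t * L) ^ σ) ≤
        Real.exp ((C3 * a) ^ σ * (1 + T)) * Real.exp ((2 * C3 / t * ℓ) ^ σ) := by
      rw [← Real.exp_add]
      exact Real.exp_le_exp.2 step3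
    have hlast : Real.exp ((2 * C3 / t * ℓ) ^ σ) ≤ Real.exp ((C4 / t * ℓ) ^ σ) := by
      refine Real.exp_le_exp.2 (Real.rpow_le_rpow (by positivity) ?_ hσ0.le)
      have h24 : 2 * C3 ≤ C4 := by
        rw [hC4]
        have h00 : 0 ≤ (C3 * a) ^ σ := Real.rpow_nonneg (by positivity) σ
        linarith
      have hdd : 2 * C3 / t ≤ C4 / t := by gcongr
      exact mul_le_mul_of_nonneg_right hdd hℓnn
    have hfirst : 2 * Real.exp (C3 * (1 + T)) * Real.exp ((C3 * a) ^ σ * (1 + T)) ≤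
        Real.exp (C4 * (1 + T)) := by
      calc 2 * Real.exp (C3 * (1 + T)) * Real.exp ((C3 * a) ^ σ * (1 + T))
          ≤ Real.exp (1 + T) * Real.exp (C3 * (1 + T)) *
              Real.exp ((C3 * a) ^ σ * (1 + T)) := by gcongr
        _ = Real.exp ((1 + C3 + (C3 * a) ^ σ) * (1 + T)) := by
            rw [← Real.exp_add, ← Real.exp_add]
            congr 1
            ring
        _ ≤ Real.exp (C4 * (1 + T)) := by
            refine Real.exp_le_exp.2 ?_
            have hc : 1 + C3 + (C3 * a) ^ σ ≤ C4 := by rw [hC4]; linarith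
            exact mul_le_mul_of_nonneg_right hc (by linarith)
    calc K = 2 * Real.exp (C3 * (1 + T)) * Real.exp ((C3 / t * L) ^ σ) := by rw [hK]; ring
      _ ≤ 2 * Real.exp (C3 * (1 + T)) *
          (Real.exp ((C3 * a) ^ σ * (1 + T)) * Real.exp ((2 * C3 / t * ℓ) ^ σ)) := by
          gcongr
      _ = (2 * Real.exp (C3 * (1 + T)) * Real.exp ((C3 * a) ^ σ * (1 + T))) *
            Real.exp ((2 * C3 / t * ℓ) ^ σ) := by ring
      _ ≤ Real.exp (C4 * (1 + T)) * Real.exp ((C4 / t * ℓ) ^ σ) :=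
          mul_le_mul hfirst hlast (Real.exp_pos _).le (Real.exp_pos _).le
  have hD1 : 1 ≤ D := by
    rw [hD]
    have h1 : 1 ≤ Real.exp (C4 * (1 + T)) := Real.one_le_exp (by positivity)
    have h2 : 1 ≤ Real.exp ((C4 / t * ℓ) ^ σ) :=
      Real.one_le_exp (Real.rpow_nonneg (mul_nonneg (by positivity) hℓnn) σ)
    simpa using mul_le_mul h1 h2 zero_le_one (zero_le_one.trans h1)
  have hfin : N ^ 2 ≤ (D * W) ^ 2 := by
    calc N ^ 2 ≤ K * W ^ 2 := step1
      _ ≤ D * W ^ 2 := by gcongr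
      _ ≤ D ^ 2 * W ^ 2 := by
          have hDD : D ≤ D ^ 2 := by
            calc D = 1 * D := (one_mul D).symm
              _ ≤ D * D := mul_le_mul_of_nonneg_right hD1 (by linarith)
              _ = D ^ 2 := (sq D).symm
          exact mul_le_mul_of_nonneg_right hDD (sq_nonneg W)
      _ = (D * W) ^ 2 := by ring
  exact (abs_le_of_sq_le_sq' hfin (mul_nonneg (by linarith) hWnn)).2


/-- The heat semigroup `S(t)u0 = sum_j e^{-lam_j t} <u0, Phi_j> Phi_j` on `L2(Omega)`,
given a Hilbert basis `B` of eigenfunctions and eigenvalues `lam`. -/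
noncomputable def heatSG {d : ℕ} {Ω : Set (EuclideanSpace ℝ (Fin d))}
    (B : HilbertBasis ℕ ℝ (Lp ℝ 2 (volume.restrict Ω))) (lam : ℕ → ℝ)
    (t : ℝ) (u : Lp ℝ 2 (volume.restrict Ω)) : Lp ℝ 2 (volume.restrict Ω) :=
  ∑' j, (Real.exp (-(lam j) * t) * ⟪u, B j⟫) • B j

/-- Multiplication by the indicator function `1_omega` on `L2(Omega)`. -/
noncomputable def indLp {d : ℕ} {Ω : Set (EuclideanSpace ℝ (Fin d))}
    (ω : Set (EuclideanSpace ℝ (Fin d))) (hω : MeasurableSet ω)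
    (f : Lp ℝ 2 (volume.restrict Ω)) : Lp ℝ 2 (volume.restrict Ω) :=
  MemLp.toLp (ω.indicator ⇑f) ((Lp.memLp f).indicator hω)

/-- Theorem 3.1, (iii) ⇒ (iv). -/
theorem observation_with_eps_implies_log_observation
    (d : ℕ) (hd : 1 ≤ d) (Ω ω : Set (EuclideanSpace ℝ (Fin d)))
    (hΩo : IsOpen Ω) (hΩb : Bornology.IsBounded Ω) (hΩc : IsConnected Ω)
    (hωo : IsOpen ω) (hωne : ω.Nonempty) (hωΩ : ω ⊆ Ω) (hωm : MeasurableSet ω)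
    (B : HilbertBasis ℕ ℝ (Lp ℝ 2 (volume.restrict Ω)))
    (lam : ℕ → ℝ) (hpos : ∀ j, 0 < lam j) (hmono : Monotone lam)
    (hlim : Tendsto lam atTop atTop)
    (σ : ℝ) (hσ : σ ∈ Ioo (0:ℝ) 1)
    -- (iii)
    (hiii : ∃ C3 > 0, ∀ ε > 0, ∀ t > 0, ∀ u0 : Lp ℝ 2 (volume.restrict Ω),
      ‖heatSG B lam t u0‖ ^ 2 ≤
        Real.exp (C3 * (1 + (1 / t) ^ (σ / (1 - σ)))) *
          Real.exp ((C3 / t * Real.log (Real.exp 1 + 1 / ε)) ^ σ) *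
            ‖indLp ω hωm (heatSG B lam t u0)‖ ^ 2
        + ε * ‖u0‖ ^ 2) :
    -- (iv)
    ∃ C4 > 0, ∀ t > 0, ∀ u0 : Lp ℝ 2 (volume.restrict Ω), u0 ≠ 0 →
      ‖heatSG B lam t u0‖ ≤
        Real.exp (C4 * (1 + (1 / t) ^ (σ / (1 - σ)))) *
          Real.exp ((C4 / t * Real.log (‖u0‖ / ‖heatSG B lam t u0‖)) ^ σ) *
            ‖indLp ω hωm (heatSG B lam t u0)‖ := by
  obtain ⟨hσ0, hσ1⟩ := hσ
  obtain ⟨C3, hC3, H⟩ := hiii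
  have hlog : 0 ≤ Real.log (Real.exp 1 + 2) :=
    Real.log_nonneg (by nlinarith [Real.add_one_le_exp (1:ℝ)])
  have hrp : 0 ≤ (C3 * Real.log (Real.exp 1 + 2)) ^ σ :=
    Real.rpow_nonneg (mul_nonneg hC3.le hlog) σ
  refine ⟨3 * C3 + (C3 * Real.log (Real.exp 1 + 2)) ^ σ + 1, by linarith, ?_⟩
  intro t ht u0 hu0
  have hUpos : 0 < ‖u0‖ := norm_pos_iff.2 hu0
  rcases (norm_nonneg (heatSG B lam t u0)).eq_or_lt with hN0 | hNpos
  · rw [← hN0]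
    positivity
  have hNU : ‖heatSG B lam t u0‖ ≤ ‖u0‖ := by
    unfold heatSG
    exact contraction_lemma B _ (fun j => by
      rw [abs_of_pos (Real.exp_pos _), Real.exp_le_one_iff]
      nlinarith [hpos j]) u0
  have hε : 0 < ‖heatSG B lam t u0‖ ^ 2 / (2 * ‖u0‖ ^ 2) := by positivity
  exact arith_core hσ0 hσ1 hC3 ht hNpos (norm_nonneg _) hNU (H _ hε t ht u0)
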